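/- Let D be a positive integer with d^u ≤ D. Then c̃_{D−1} ≤ e^{2D−1}·c̃_0, where e is Euler's number. -/

import Mathlib

/-- If `D` is a positive integer with `d^u ≤ D`, then `c̃_{D−1} ≤ e^{2D−1}·c̃_0`,
where `c̃_0 = c_0 > 0` and `c̃_w = (1/w)·Σ_{r=0}^{w−1} d^u·c̃_r` for `w ≥ 1`,
with `d^u > 0` and `e` Euler's number. -/
theorem ct_Dsub1_exp_bound
    (du c0 : ℝ) (hdu : 0 < du) (hc0 : 0 < c0)
    (ct : ℕ → ℝ) (hct0 : ct 0 = c0)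
    (hct : ∀ w : ℕ, 1 ≤ w → ct w = (1 / (w : ℝ)) * ∑ r ∈ Finset.range w, du * ct r)
    (D : ℕ) (hD : 1 ≤ D) (hduD : du ≤ (D : ℝ)) :
    ct (D - 1) ≤ Real.exp 1 ^ (2 * D - 1) * ct 0 := by
  have he1 : (2 : ℝ) ≤ Real.exp 1 := by
    have := Real.add_one_le_exp (1 : ℝ)
    linarith
  have hepos : (0:ℝ) < Real.exp 1 := Real.exp_pos 1
  -- positivity of ct
  have hctpos : ∀ w, 0 < ct w := by
    intro w
    induction w using Nat.strong_induction_on with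
    | _ w ih =>
      match w with
      | 0 => rw [hct0]; exact hc0
      | (n+1) =>
        rw [hct (n+1) (Nat.succ_le_succ (Nat.zero_le n))]
        apply mul_pos
        · positivity
        · apply Finset.sum_pos
          · intro i hi
            exact mul_pos hdu (ih i (Finset.mem_range.mp hi))
          · exact ⟨0, Finset.mem_range.mpr (Nat.succ_pos n)⟩
  set S : ℕ → ℝ := fun w => ∑ r ∈ Finset.range w, ct r with hS
  have hSpos : ∀ w, 0 < S (w+1) := by
    intro w
    apply Finset.sum_pos (fun i _ => hctpos i) ⟨0, Finset.mem_range.mpr (Nat.succ_pos w)⟩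
  have hctS : ∀ w : ℕ, 1 ≤ w → ct w = (1 / (w:ℝ)) * (du * S w) := by
    intro w hw
    rw [hct w hw]
    simp only [hS, Finset.mul_sum]
  have hrec : ∀ m : ℕ, S (m+2) = S (m+1) * (1 + du / (m+1)) := by
    intro m
    have h2 : S (m+2) = S (m+1) + ct (m+1) := by
      simp [hS, Finset.sum_range_succ]
    rw [h2, hctS (m+1) (by omega)]
    have hm1 : ((m:ℝ)+1) ≠ 0 := by positivity
    push_cast
    field_simp
  have hbound : ∀ m : ℕ, S (m+1) ≤ c0 * (Nat.choose (D + m) m : ℝ) := by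
    intro m
    induction m with
    | zero => simp [hS, hct0]
    | succ n ih =>
      rw [hrec n]
      have hn1 : (0:ℝ) < (n:ℝ) + 1 := by positivity
      have hfac : 1 + du / ((n:ℝ)+1) ≤ ((D:ℝ) + n + 1) / ((n:ℝ)+1) := by
        rw [le_div_iff₀ hn1, add_mul, div_mul_cancel₀ _ (ne_of_gt hn1)]
        linarith
      have hkey : (Nat.choose (D+n) n : ℝ) * ((D:ℝ) + n + 1) =
          (Nat.choose (D+n+1) (n+1) : ℝ) * ((n:ℝ)+1) := by
        have := Nat.add_one_mul_choose_eq (D+n) n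
        have : ((D+n+1) * Nat.choose (D+n) n : ℕ)
            = (Nat.choose (D+n+1) (n+1) * (n+1) : ℕ) := this
        exact_mod_cast by push_cast [← this]; ring
      calc S (n+1) * (1 + du / (n+1))
          ≤ (c0 * (Nat.choose (D+n) n : ℝ)) * (((D:ℝ) + n + 1) / ((n:ℝ)+1)) := by
            apply mul_le_mul ih ?_ ?_ ?_
            · push_cast; exact hfac
            · have : 0 < 1 + du / ((n:ℝ)+1) := by positivity
              linarith
            · positivity
        _ = c0 * (Nat.choose (D+n+1) (n+1) : ℝ) := by
            field_simp
            linear_combination hkey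
        _ = c0 * (Nat.choose (D + (n+1)) (n+1) : ℝ) := by norm_num [Nat.add_assoc]
  have hchoose : ∀ n k : ℕ, Nat.choose n k ≤ 2 ^ n := by
    intro n k
    by_cases hk : k ≤ n
    · calc Nat.choose n k ≤ ∑ i ∈ Finset.range (n+1), Nat.choose n i :=
            Finset.single_le_sum (fun i _ => Nat.zero_le _)
              (Finset.mem_range.mpr (by omega))
        _ = 2 ^ n := Nat.sum_range_choose n
    · rw [Nat.choose_eq_zero_of_lt (by omega)]; exact Nat.zero_le _
  -- case D = 1
  rcases Nat.lt_or_ge D 2 with hD1 | hD2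
  · have hD1' : D = 1 := by omega
    subst hD1'
    simp only [Nat.sub_self]
    have : (1:ℝ) ≤ Real.exp 1 ^ (2*1 - 1) := by
      norm_num
    nlinarith [hctpos 0]
  · -- D ≥ 2, set m = D - 2
    obtain ⟨m, rfl⟩ : ∃ m, D = m + 2 := ⟨D - 2, by omega⟩
    have hD1 : (m + 2 : ℕ) - 1 = m + 1 := by omega
    have h2D : 2 * (m + 2) - 1 = 2*m + 3 := by omega
    rw [hD1, h2D, hct0]
    rw [hctS (m+1) (by omega)]
    have hSb := hbound m
    have hcb : (Nat.choose ((m+2) + m) m : ℝ) ≤ (4:ℝ) ^ (m+1) := by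
      have h1 : Nat.choose ((m+2)+m) m ≤ 2 ^ (2*m+2) := by
        have h2 : (m+2)+m = 2*m+2 := by omega
        rw [h2]; exact hchoose _ m
      calc (Nat.choose ((m+2)+m) m : ℝ) ≤ ((2:ℝ)) ^ (2*m+2) := by exact_mod_cast h1
        _ = (4:ℝ) ^ (m+1) := by rw [show 2*m+2 = 2*(m+1) by ring, pow_mul]; norm_num
    have hm1 : (0:ℝ) < (m:ℝ) + 1 := by positivity
    have hstep1 : (1 / ((m+1:ℕ):ℝ)) * (du * S (m+1)) ≤ 2 * (4:ℝ)^(m+1) * c0 := by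
      have hdule : du ≤ (m:ℝ) + 2 := by push_cast at hduD ⊢; linarith
      have hS1 : S (m+1) ≤ c0 * (4:ℝ)^(m+1) := le_trans hSb (by nlinarith [hc0.le])
      have hS1pos := hSpos m
      have h1 : du * S (m+1) ≤ ((m:ℝ)+2) * (c0 * (4:ℝ)^(m+1)) := by
        apply mul_le_mul hdule hS1 hS1pos.le (by positivity)
      have h2 : (1 / ((m+1:ℕ):ℝ)) * (du * S (m+1))
          ≤ (1 / ((m:ℝ)+1)) * (((m:ℝ)+2) * (c0 * (4:ℝ)^(m+1))) := by
        push_cast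
        apply mul_le_mul_of_nonneg_left h1 (by positivity)
      refine h2.trans ?_
      rw [div_mul_eq_mul_div, one_mul, div_le_iff₀ hm1]
      have h4 : (0:ℝ) < (4:ℝ)^(m+1) := by positivity
      nlinarith [hc0.le]
    refine hstep1.trans ?_
    have hfinal : 2 * (4:ℝ)^(m+1) ≤ Real.exp 1 ^ (2*m+3) := by
      have h4e : (4:ℝ) ≤ Real.exp 1 ^ 2 := by nlinarith
      have : (4:ℝ)^(m+1) ≤ (Real.exp 1 ^ 2) ^ (m+1) :=
        pow_le_pow_left₀ (by norm_num) h4e (m+1)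
      calc 2 * (4:ℝ)^(m+1) ≤ Real.exp 1 * (Real.exp 1 ^ 2) ^ (m+1) := by
            apply mul_le_mul he1 this (by positivity) hepos.le
        _ = Real.exp 1 ^ (2*m+3) := by rw [← pow_mul]; ring
    nlinarith [hc0.le]
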